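/- A GTS (X, μ) is T3.5 if and only if there exist an index set J and an embedding f of (X, μ) into ([0,1]^J, γ₀^J), where γ₀^J is the product GT of J copies of ([0,1], γ₀). Moreover, if |X| ≥ 2, then J and f can be chosen so that f(X) is dense in ([0,1]^J, γ₀^J). -/

import Mathlib

universe u

/-- A generalized topology on `X`: contains `∅` and is closed under arbitrary unions. -/
def IsGT {X : Type*} (μ : Set (Set X)) : Prop :=
  ∅ ∈ μ ∧ ∀ S : Set (Set X), S ⊆ μ → ⋃₀ S ∈ μ

/-- `f` is `(μ, ν)`-continuous: preimages of `ν`-open sets are `μ`-open. -/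
def GCont {X Y : Type*} (μ : Set (Set X)) (ν : Set (Set Y)) (f : X → Y) : Prop :=
  ∀ N ∈ ν, f ⁻¹' N ∈ μ

/-- `c_μ A`: the intersection of all `μ`-closed sets containing `A`. -/
def gClosure {X : Type*} (μ : Set (Set X)) (A : Set X) : Set X :=
  ⋂₀ {F : Set X | Fᶜ ∈ μ ∧ A ⊆ F}

/-- The GTS `(X, μ)` is T1. -/
def GT1 {X : Type*} (μ : Set (Set X)) : Prop :=
  ∀ x y : X, x ≠ y → ∃ M ∈ μ, x ∈ M ∧ y ∉ M

/-- Császár's generalized topology `γ₀` on `[0,1]`: arbitrary unions of sets of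
the form `[0, x)` and `(y, 1]` with `x, y ∈ [0,1]`. -/
def gamma0 : Set (Set unitInterval) :=
  {U | ∃ S : Set (Set unitInterval),
    (∀ V ∈ S, (∃ a : unitInterval, V = Set.Iio a) ∨ (∃ b : unitInterval, V = Set.Ioi b)) ∧
    U = ⋃₀ S}

/-- The GTS `(X, μ)` is completely regular. -/
def GCompletelyRegular {X : Type*} (μ : Set (Set X)) : Prop :=
  ∀ (x : X) (F : Set X), Fᶜ ∈ μ → x ∉ F →
    ∃ f : X → unitInterval, GCont μ gamma0 f ∧ f x = 0 ∧ ∀ y ∈ F, f y = 1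

/-- `f` is an embedding of `(X, μ)` into `(Y, ν)`: it is injective and the
images of `μ`-open sets are exactly the traces of `ν`-open sets on `f(X)`. -/
def GEmbedding {X Y : Type*} (μ : Set (Set X)) (ν : Set (Set Y)) (f : X → Y) : Prop :=
  Function.Injective f ∧
    {A : Set Y | ∃ M ∈ μ, A = f '' M} = {A : Set Y | ∃ N ∈ ν, A = N ∩ Set.range f}

/-- The product GT `γ₀^J` on `[0,1]^J`, the `J`-th power of `([0,1], γ₀)`. -/
def prodGT0 (J : Type u) : Set (Set (J → unitInterval)) :=
  {U | ∃ M : J → Set unitInterval, (∀ α, M α ∈ gamma0) ∧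
    U = ⋃ α, (fun g => g α) ⁻¹' M α}

open Set

lemma g0_empty : (∅ : Set unitInterval) ∈ gamma0 := ⟨∅, by simp, by simp⟩

lemma g0_Iio (a : unitInterval) : Iio a ∈ gamma0 :=
  ⟨{Iio a}, by rintro V rfl; exact Or.inl ⟨a, rfl⟩, by simp⟩

lemma g0_Ioi (b : unitInterval) : Ioi b ∈ gamma0 :=
  ⟨{Ioi b}, by rintro V rfl; exact Or.inr ⟨b, rfl⟩, by simp⟩

lemma g0_univ : (univ : Set unitInterval) ∈ gamma0 := by
  refine ⟨{Iio 1, Ioi 0}, ?_, ?_⟩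
  · rintro V (rfl | rfl)
    · exact Or.inl ⟨1, rfl⟩
    · exact Or.inr ⟨0, rfl⟩
  · ext t
    simp only [mem_univ, true_iff, sUnion_insert, sUnion_singleton, mem_union, mem_Iio, mem_Ioi,
      ← Subtype.coe_lt_coe]
    have h1 := t.2.1
    have h2 := t.2.2
    rcases lt_or_ge (t:ℝ) 1 with h | h
    · exact Or.inl (by exact_mod_cast h)
    · exact Or.inr (by push_cast; linarith)


lemma g0_isGT : IsGT gamma0 := by
  refine ⟨g0_empty, ?_⟩
  intro S hS
  choose T hT1 hT2 using fun (U : S) => hS U.2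
  refine ⟨⋃ U : S, T U, ?_, ?_⟩
  · intro V hV
    obtain ⟨U, hU⟩ := mem_iUnion.mp hV
    exact hT1 U V hU
  · ext x
    simp only [mem_sUnion, mem_iUnion]
    constructor
    · rintro ⟨U, hUS, hxU⟩
      have h2 : U = ⋃₀ T ⟨U, hUS⟩ := hT2 ⟨U, hUS⟩
      rw [h2] at hxU
      obtain ⟨V, hVT, hxV⟩ := hxU
      exact ⟨V, ⟨⟨U, hUS⟩, hVT⟩, hxV⟩
    · rintro ⟨V, hV, hxV⟩
      obtain ⟨U, hVT⟩ := hV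
      have h2 : (U : Set unitInterval) = ⋃₀ T U := hT2 U
      exact ⟨U, U.2, h2 ▸ ⟨V, hVT, hxV⟩⟩

lemma g0_zero_or_one {U : Set unitInterval} (hU : U ∈ gamma0) (h : U.Nonempty) :
    (0 : unitInterval) ∈ U ∨ (1 : unitInterval) ∈ U := by
  obtain ⟨S, hS, rfl⟩ := hU
  obtain ⟨t, V, hVS, htV⟩ := h
  rcases hS V hVS with ⟨a, rfl⟩ | ⟨b, rfl⟩
  · refine Or.inl ⟨Iio a, hVS, ?_⟩
    have := t.2.1
    have htV' : (t:ℝ) < a := htV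
    rw [mem_Iio, ← Subtype.coe_lt_coe]
    push_cast
    linarith
  · refine Or.inr ⟨Ioi b, hVS, ?_⟩
    have := t.2.2
    have htV' : (b:ℝ) < t := htV
    rw [mem_Ioi, ← Subtype.coe_lt_coe]
    push_cast
    linarith

lemma g0_lt (s : ℝ) : {t : unitInterval | (t : ℝ) < s} ∈ gamma0 := by
  rcases le_or_gt s 0 with h0 | h0
  · have : {t : unitInterval | (t : ℝ) < s} = ∅ := by
      ext t
      simp only [mem_setOf_eq, mem_empty_iff_false, iff_false, not_lt]
      exact h0.trans t.2.1
    rw [this]; exact g0_empty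
  · rcases lt_or_ge 1 s with h1 | h1
    · have : {t : unitInterval | (t : ℝ) < s} = univ := by
        ext t
        simp only [mem_setOf_eq, mem_univ, iff_true]
        exact lt_of_le_of_lt t.2.2 h1
      rw [this]; exact g0_univ
    · have : {t : unitInterval | (t : ℝ) < s} = Iio ⟨s, h0.le, h1⟩ := by
        ext t
        simp only [mem_setOf_eq, mem_Iio, ← Subtype.coe_lt_coe]
      rw [this]; exact g0_Iio _

lemma g0_gt (s : ℝ) : {t : unitInterval | s < (t : ℝ)} ∈ gamma0 := by
  rcases lt_or_ge s 0 with h0 | h0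
  · have : {t : unitInterval | s < (t : ℝ)} = univ := by
      ext t
      simp only [mem_setOf_eq, mem_univ, iff_true]
      exact lt_of_lt_of_le h0 t.2.1
    rw [this]; exact g0_univ
  · rcases le_or_gt 1 s with h1 | h1
    · have : {t : unitInterval | s < (t : ℝ)} = ∅ := by
        ext t
        simp only [mem_setOf_eq, mem_empty_iff_false, iff_false, not_lt]
        exact t.2.2.trans h1
      rw [this]; exact g0_empty
    · have : {t : unitInterval | s < (t : ℝ)} = Ioi ⟨s, h0, h1.le⟩ := by
        ext t
        simp only [mem_setOf_eq, mem_Ioi, ← Subtype.coe_lt_coe]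
      rw [this]; exact g0_Ioi _

lemma lin_lt_mem {p : ℝ} (hp : p ≠ 0) (r : ℝ) :
    {t : unitInterval | p * (t : ℝ) < r} ∈ gamma0 := by
  rcases hp.lt_or_gt with hneg | hpos
  · have : {t : unitInterval | p * (t : ℝ) < r} = {t : unitInterval | r / p < (t : ℝ)} := by
      ext t
      simp only [mem_setOf_eq]
      rw [div_lt_iff_of_neg hneg, mul_comm]
    rw [this]; exact g0_gt _
  · have : {t : unitInterval | p * (t : ℝ) < r} = {t : unitInterval | (t : ℝ) < r / p} := by
      ext t
      simp only [mem_setOf_eq]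
      rw [lt_div_iff₀ hpos, mul_comm]
    rw [this]; exact g0_lt _

lemma lin_gt_mem {p : ℝ} (hp : p ≠ 0) (r : ℝ) :
    {t : unitInterval | r < p * (t : ℝ)} ∈ gamma0 := by
  rcases hp.lt_or_gt with hneg | hpos
  · have : {t : unitInterval | r < p * (t : ℝ)} = {t : unitInterval | (t : ℝ) < r / p} := by
      ext t
      simp only [mem_setOf_eq]
      rw [lt_div_iff_of_neg hneg, mul_comm]
    rw [this]; exact g0_lt _
  · have : {t : unitInterval | r < p * (t : ℝ)} = {t : unitInterval | r / p < (t : ℝ)} := by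
      ext t
      simp only [mem_setOf_eq]
      rw [div_lt_iff₀ hpos, mul_comm]
    rw [this]; exact g0_gt _

lemma projIcc_lt_iff {r : ℝ} {u : unitInterval} :
    projIcc (0:ℝ) 1 zero_le_one r < u ↔ 0 < (u:ℝ) ∧ r < (u:ℝ) := by
  rw [← Subtype.coe_lt_coe, coe_projIcc]
  constructor
  · intro h
    have h' := max_lt_iff.mp h
    exact ⟨h'.1, (min_lt_iff.mp h'.2).resolve_left (not_lt.mpr u.2.2)⟩
  · rintro ⟨h1, h2⟩
    exact max_lt_iff.mpr ⟨h1, min_lt_iff.mpr (Or.inr h2)⟩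

lemma lt_projIcc_iff {r : ℝ} {u : unitInterval} :
    u < projIcc (0:ℝ) 1 zero_le_one r ↔ (u:ℝ) < 1 ∧ (u:ℝ) < r := by
  rw [← Subtype.coe_lt_coe, coe_projIcc]
  constructor
  · intro h
    exact lt_min_iff.mp ((lt_max_iff.mp h).resolve_left (not_lt.mpr u.2.1))
  · rintro ⟨h1, h2⟩
    exact lt_max_iff.mpr (Or.inr (lt_min_iff.mpr ⟨h1, h2⟩))

lemma strF_cont {p q : ℝ} (hp : p ≠ 0) :
    GCont gamma0 gamma0
      (fun t : unitInterval => projIcc (0:ℝ) 1 zero_le_one (p * (t:ℝ) + q)) := by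
  set h : unitInterval → unitInterval :=
    fun t : unitInterval => projIcc (0:ℝ) 1 zero_le_one (p * (t:ℝ) + q) with hh
  intro V hV
  obtain ⟨S, hS, rfl⟩ := hV
  rw [preimage_sUnion, ← sUnion_image]
  apply g0_isGT.2
  rintro _ ⟨V, hVS, rfl⟩
  rcases hS V hVS with ⟨a, rfl⟩ | ⟨b, rfl⟩
  · have hset : h ⁻¹' Iio a = {t : unitInterval | 0 < (a:ℝ) ∧ p * (t:ℝ) + q < (a:ℝ)} := by
      ext t
      simp only [mem_preimage, mem_Iio, mem_setOf_eq, hh, projIcc_lt_iff]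
    rw [hset]
    rcases le_or_gt (a:ℝ) 0 with h0 | h0
    · have : {t : unitInterval | 0 < (a:ℝ) ∧ p * (t:ℝ) + q < (a:ℝ)} = ∅ := by
        ext t
        simp only [mem_setOf_eq, mem_empty_iff_false, iff_false, not_and]
        intro hc
        exact absurd hc (not_lt.mpr h0)
      rw [this]; exact g0_empty
    · have : {t : unitInterval | 0 < (a:ℝ) ∧ p * (t:ℝ) + q < (a:ℝ)}
          = {t : unitInterval | p * (t:ℝ) < (a:ℝ) - q} := by
        ext t
        simp only [mem_setOf_eq]
        constructor
        · rintro ⟨_, hlt⟩; linarith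
        · intro hlt; exact ⟨h0, by linarith⟩
      rw [this]; exact lin_lt_mem hp _
  · have hset : h ⁻¹' Ioi b = {t : unitInterval | (b:ℝ) < 1 ∧ (b:ℝ) < p * (t:ℝ) + q} := by
      ext t
      simp only [mem_preimage, mem_Ioi, mem_setOf_eq, hh, lt_projIcc_iff]
    rw [hset]
    rcases le_or_gt 1 (b:ℝ) with h1 | h1
    · have : {t : unitInterval | (b:ℝ) < 1 ∧ (b:ℝ) < p * (t:ℝ) + q} = ∅ := by
        ext t
        simp only [mem_setOf_eq, mem_empty_iff_false, iff_false, not_and]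
        intro hc
        exact absurd hc (not_lt.mpr h1)
      rw [this]; exact g0_empty
    · have : {t : unitInterval | (b:ℝ) < 1 ∧ (b:ℝ) < p * (t:ℝ) + q}
          = {t : unitInterval | (b:ℝ) - q < p * (t:ℝ)} := by
        ext t
        simp only [mem_setOf_eq]
        constructor
        · rintro ⟨_, hlt⟩; linarith
        · intro hlt; exact ⟨h1, by linarith⟩
      rw [this]; exact lin_gt_mem hp _

lemma prodGT0_coord {J : Type u} (α : J) {V : Set unitInterval} (hV : V ∈ gamma0) :
    (fun g : J → unitInterval => g α) ⁻¹' V ∈ prodGT0 J := by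
  classical
  refine ⟨Function.update (fun _ => ∅) α V, ?_, ?_⟩
  · intro β
    by_cases h : β = α
    · subst h; rw [Function.update_self]; exact hV
    · rw [Function.update_of_ne h]; exact g0_empty
  · ext g
    simp only [mem_preimage, mem_iUnion]
    constructor
    · intro h; exact ⟨α, by rwa [Function.update_self]⟩
    · rintro ⟨β, hβ⟩
      by_cases h : β = α
      · subst h; rwa [Function.update_self] at hβ
      · rw [Function.update_of_ne h] at hβ; exact absurd hβ (notMem_empty _)

lemma emb_preimage {X : Type u} {J : Type u} {μ : Set (Set X)} {f : X → (J → unitInterval)}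
    (hf : GEmbedding μ (prodGT0 J) f) {N : Set (J → unitInterval)} (hN : N ∈ prodGT0 J) :
    f ⁻¹' N ∈ μ := by
  have h1 : N ∩ range f ∈ {A | ∃ M ∈ μ, A = f '' M} := by
    rw [hf.2]; exact ⟨N, hN, rfl⟩
  obtain ⟨M, hM, hMe⟩ := h1
  have h2 : f ⁻¹' N = M := by
    rw [← preimage_inter_range, hMe, preimage_image_eq _ hf.1]
  rw [h2]; exact hM

lemma compl_singleton_mem {X : Type u} {μ : Set (Set X)} (hμ : IsGT μ) (ht1 : GT1 μ) (z : X) :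
    ({z}ᶜ : Set X) ∈ μ := by
  have h : ({z}ᶜ : Set X) = ⋃₀ {M | M ∈ μ ∧ z ∉ M} := by
    ext w
    simp only [mem_compl_iff, mem_singleton_iff, mem_sUnion, mem_setOf_eq]
    constructor
    · intro hw
      obtain ⟨M, hM, hwM, hzM⟩ := ht1 w z hw
      exact ⟨M, ⟨hM, hzM⟩, hwM⟩
    · rintro ⟨M, ⟨_, hzM⟩, hwM⟩ rfl
      exact hzM hwM
  rw [h]; exact hμ.2 _ (fun M hM => hM.1)

lemma back_T1 {X J : Type u} {μ : Set (Set X)} {f : X → (J → unitInterval)}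
    (hf : GEmbedding μ (prodGT0 J) f) : GT1 μ := by
  intro x y hxy
  have hne : f x ≠ f y := fun h => hxy (hf.1 h)
  obtain ⟨α, hα⟩ := Function.ne_iff.mp hne
  rcases hα.lt_or_gt with h | h
  · refine ⟨f ⁻¹' ((fun g : J → unitInterval => g α) ⁻¹' Iio (f y α)),
      emb_preimage hf (prodGT0_coord α (g0_Iio _)), h, ?_⟩
    simp only [mem_preimage, mem_Iio, lt_self_iff_false, not_false_iff]
  · refine ⟨f ⁻¹' ((fun g : J → unitInterval => g α) ⁻¹' Ioi (f y α)),
      emb_preimage hf (prodGT0_coord α (g0_Ioi _)), h, ?_⟩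
    simp only [mem_preimage, mem_Ioi, lt_self_iff_false, not_false_iff]

lemma back_CR {X J : Type u} {μ : Set (Set X)} {f : X → (J → unitInterval)}
    (hf : GEmbedding μ (prodGT0 J) f) : GCompletelyRegular μ := by
  intro x F hF hxF
  have h1 : f '' Fᶜ ∈ {A | ∃ M ∈ μ, A = f '' M} := ⟨Fᶜ, hF, rfl⟩
  rw [hf.2] at h1
  obtain ⟨N, hN, hNe⟩ := h1
  have hfx : f x ∈ N := by
    have h2 : f x ∈ f '' Fᶜ := mem_image_of_mem f hxF
    rw [hNe] at h2
    exact h2.1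
  have hFnotN : ∀ y ∈ F, f y ∉ N := by
    intro y hy hyN
    have h3 : f y ∈ f '' Fᶜ := by rw [hNe]; exact ⟨hyN, mem_range_self y⟩
    obtain ⟨z, hz, hzf⟩ := h3
    exact hz (hf.1 hzf ▸ hy)
  obtain ⟨Mfam, hMfam, rfl⟩ := hN
  obtain ⟨α, hα⟩ := mem_iUnion.mp hfx
  have hfxα : f x α ∈ Mfam α := hα
  obtain ⟨S, hS, hU⟩ := hMfam α
  rw [hU] at hfxα
  obtain ⟨V, hVS, hfxV⟩ := hfxα
  have hFout : ∀ y ∈ F, f y α ∉ Mfam α := by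
    intro y hy h
    exact hFnotN y hy (mem_iUnion.mpr ⟨α, h⟩)
  set c : ℝ := (f x α : ℝ) with hc
  rcases hS V hVS with ⟨a, rfl⟩ | ⟨b, rfl⟩
  · -- f x α ∈ Iio a
    have hca : c < (a : ℝ) := hfxV
    have hpos : (0:ℝ) < a - c := by linarith
    set p : ℝ := 1 / ((a:ℝ) - c) with hpdef
    set q : ℝ := -c / ((a:ℝ) - c) with hqdef
    have hp : p ≠ 0 := ne_of_gt (by positivity)
    refine ⟨fun y => projIcc (0:ℝ) 1 zero_le_one (p * (f y α : ℝ) + q), ?_, ?_, ?_⟩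
    · intro W hW
      exact emb_preimage hf (prodGT0_coord α (strF_cont hp W hW))
    · show projIcc (0:ℝ) 1 zero_le_one (p * c + q) = 0
      have harg : p * c + q = 0 := by rw [hpdef, hqdef]; field_simp; ring
      rw [harg]
      apply Subtype.ext
      rw [coe_projIcc]
      norm_num
    · intro y hy
      have hya : (a : ℝ) ≤ (f y α : ℝ) := by
        by_contra hlt
        push_neg at hlt
        exact hFout y hy (hU ▸ ⟨Iio a, hVS, hlt⟩)
      have key : 1 ≤ p * (f y α : ℝ) + q := by
        have harg : p * (f y α : ℝ) + q = ((f y α : ℝ) - c) / ((a:ℝ) - c) := by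
          rw [hpdef, hqdef]
          field_simp
          ring
        rw [harg, le_div_iff₀ hpos]
        linarith
      apply Subtype.ext
      rw [coe_projIcc, min_eq_left key]
      norm_num
  · -- f x α ∈ Ioi b
    have hbc : (b : ℝ) < c := hfxV
    have hpos : (0:ℝ) < c - b := by linarith
    set p : ℝ := -(1 / (c - (b:ℝ))) with hpdef
    set q : ℝ := c / (c - (b:ℝ)) with hqdef
    have hp : p ≠ 0 := by
      rw [hpdef]
      simp only [ne_eq, neg_eq_zero]
      positivity
    refine ⟨fun y => projIcc (0:ℝ) 1 zero_le_one (p * (f y α : ℝ) + q), ?_, ?_, ?_⟩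
    · intro W hW
      exact emb_preimage hf (prodGT0_coord α (strF_cont hp W hW))
    · show projIcc (0:ℝ) 1 zero_le_one (p * c + q) = 0
      have harg : p * c + q = 0 := by rw [hpdef, hqdef]; field_simp; ring
      rw [harg]
      apply Subtype.ext
      rw [coe_projIcc]
      norm_num
    · intro y hy
      have hya : (f y α : ℝ) ≤ (b : ℝ) := by
        by_contra hlt
        push_neg at hlt
        exact hFout y hy (hU ▸ ⟨Ioi b, hVS, hlt⟩)
      have key : 1 ≤ p * (f y α : ℝ) + q := by
        have harg : p * (f y α : ℝ) + q = (c - (f y α : ℝ)) / (c - (b:ℝ)) := by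
          rw [hpdef, hqdef]
          field_simp
          ring
        rw [harg, le_div_iff₀ hpos]
        linarith
      apply Subtype.ext
      rw [coe_projIcc, min_eq_left key]
      norm_num

lemma embed_aux {X : Type u} {μ : Set (Set X)} (hμ : IsGT μ) (ht1 : GT1 μ)
    (P : (X → unitInterval) → Prop)
    (hP : ∀ g, P g → GCont μ gamma0 g)
    (hsep : ∀ (x : X) (F : Set X), Fᶜ ∈ μ → x ∉ F → F.Nonempty →
      ∃ g, P g ∧ g x = 0 ∧ ∀ y ∈ F, g y = 1)
    (huniv : Set.univ ∈ μ → ∀ y : X, ∃ g, P g ∧ g y ≠ 1) :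
    GEmbedding μ (prodGT0 {g : X → unitInterval // P g}) (fun x g => g.1 x) := by
  classical
  set J := {g : X → unitInterval // P g} with hJ
  set f : X → (J → unitInterval) := fun x g => g.1 x with hfdef
  constructor
  · -- injective
    intro x y hxy
    by_contra hne
    obtain ⟨g, hgP, hg0, hg1⟩ :=
      hsep x {y} (compl_singleton_mem hμ ht1 y) (by simp [hne]) ⟨y, rfl⟩
    have h := congrFun hxy (⟨g, hgP⟩ : J)
    simp only [hfdef] at h
    rw [hg0, hg1 y rfl] at h
    have : ((0 : unitInterval) : ℝ) = ((1 : unitInterval) : ℝ) := congrArg _ h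
    norm_num at this
  · ext A
    simp only [mem_setOf_eq]
    constructor
    · rintro ⟨M, hM, rfl⟩
      set Mfam : J → Set unitInterval :=
        fun g => if ∀ z, z ∉ M → g.1 z = 1 then Iio 1 else ∅ with hMfam
      refine ⟨⋃ g : J, (fun h : J → unitInterval => h g) ⁻¹' Mfam g, ⟨Mfam, ?_, rfl⟩, ?_⟩
      · intro g
        by_cases h : ∀ z, z ∉ M → g.1 z = 1
        · simp only [hMfam, if_pos h]; exact g0_Iio 1
        · simp only [hMfam, if_neg h]; exact g0_empty
      · apply Subset.antisymm
        · rintro _ ⟨x, hxM, rfl⟩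
          refine ⟨?_, mem_range_self x⟩
          by_cases hMc : (Mᶜ : Set X).Nonempty
          · obtain ⟨g, hgP, hg0, hg1⟩ := hsep x Mᶜ (by rwa [compl_compl]) (by simpa) hMc
            have hcond : ∀ z, z ∉ M → g z = 1 := fun z hz => hg1 z hz
            refine mem_iUnion.mpr ⟨⟨g, hgP⟩, ?_⟩
            simp only [mem_preimage, hfdef, hMfam, if_pos hcond]
            rw [hg0]
            exact show (0:unitInterval) < 1 by
              rw [← Subtype.coe_lt_coe]; norm_num
          · have hMuniv : M = univ := by
              rw [not_nonempty_iff_eq_empty] at hMc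
              rwa [compl_empty_iff] at hMc
            obtain ⟨g, hgP, hg1⟩ := huniv (hMuniv ▸ hM) x
            have hcond : ∀ z, z ∉ M → g z = 1 := by
              intro z hz
              exact absurd (hMuniv ▸ mem_univ z) hz
            refine mem_iUnion.mpr ⟨⟨g, hgP⟩, ?_⟩
            simp only [mem_preimage, hfdef, hMfam, if_pos hcond]
            exact mem_Iio.mpr (lt_of_le_of_ne unitInterval.le_one' hg1)
        · rintro w ⟨hwN, y, rfl⟩
          obtain ⟨g, hg⟩ := mem_iUnion.mp hwN
          by_cases h : ∀ z, z ∉ M → g.1 z = 1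
          · simp only [mem_preimage, hfdef, hMfam, if_pos h] at hg
            refine mem_image_of_mem f ?_
            by_contra hyM
            rw [h y hyM] at hg
            exact lt_irrefl _ (mem_Iio.mp hg)
          · simp only [mem_preimage, hfdef, hMfam, if_neg h] at hg
            exact absurd hg (notMem_empty _)
    · rintro ⟨N, hN, rfl⟩
      refine ⟨f ⁻¹' N, ?_, (image_preimage_eq_inter_range).symm⟩
      obtain ⟨Mfam, hMfam, rfl⟩ := hN
      have heq : f ⁻¹' (⋃ g : J, (fun h : J → unitInterval => h g) ⁻¹' Mfam g)
          = ⋃₀ (range fun g : J => g.1 ⁻¹' Mfam g) := by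
        rw [sUnion_range, preimage_iUnion]
        rfl
      rw [heq]
      apply hμ.2
      rintro _ ⟨g, rfl⟩
      exact hP g.1 g.2 (Mfam g) (hMfam g)

theorem stmt14 {X : Type u} (μ : Set (Set X)) (hμ : IsGT μ) :
    ((GCompletelyRegular μ ∧ GT1 μ) ↔
      ∃ (J : Type u) (f : X → (J → unitInterval)), GEmbedding μ (prodGT0 J) f) ∧
    ((∃ x y : X, x ≠ y) → (GCompletelyRegular μ ∧ GT1 μ) →
      ∃ (J : Type u) (f : X → (J → unitInterval)),
        GEmbedding μ (prodGT0 J) f ∧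
          gClosure (prodGT0 J) (Set.range f) = Set.univ) := by
  constructor
  · constructor
    · rintro ⟨hcr, ht1⟩
      refine ⟨{g : X → unitInterval // GCont μ gamma0 g}, fun x g => g.1 x, ?_⟩
      refine embed_aux hμ ht1 (GCont μ gamma0) (fun g h => h) ?_ ?_
      · intro x F hF hx _
        obtain ⟨g, hg, h0, h1⟩ := hcr x F hF hx
        exact ⟨g, hg, h0, h1⟩
      · intro hu y
        refine ⟨fun _ => 0, ?_, ?_⟩
        · intro V hV
          by_cases h0 : (0:unitInterval) ∈ V
          · have h : (fun _ : X => (0:unitInterval)) ⁻¹' V = Set.univ := by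
              ext w; simp [h0]
            rw [h]; exact hu
          · have h : (fun _ : X => (0:unitInterval)) ⁻¹' V = ∅ := by
              ext w; simp [h0]
            rw [h]; exact hμ.1
        · intro h
          have := congrArg Subtype.val h
          norm_num at this
    · rintro ⟨J, f, hf⟩
      exact ⟨back_CR hf, back_T1 hf⟩
  · rintro ⟨x₀, y₀, hxy⟩ ⟨hcr, ht1⟩
    set P : (X → unitInterval) → Prop :=
      fun g => GCont μ gamma0 g ∧ (∃ x, g x = 0) ∧ (∃ x, g x = 1) with hPdef
    refine ⟨{g : X → unitInterval // P g}, fun x g => g.1 x, ?_, ?_⟩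
    · refine embed_aux hμ ht1 P (fun g h => h.1) ?_ ?_
      · intro x F hF hx hFne
        obtain ⟨g, hg, h0, h1⟩ := hcr x F hF hx
        obtain ⟨w, hw⟩ := hFne
        exact ⟨g, ⟨hg, ⟨x, h0⟩, ⟨w, h1 w hw⟩⟩, h0, h1⟩
      · intro _ y
        by_cases hy : y = x₀
        · obtain ⟨g, hg, h0, h1⟩ := hcr y {y₀}
            (compl_singleton_mem hμ ht1 y₀) (by simp [hy]; exact hxy)
          refine ⟨g, ⟨hg, ⟨y, h0⟩, ⟨y₀, h1 y₀ rfl⟩⟩, ?_⟩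
          rw [h0]; intro h
          have := congrArg Subtype.val h
          norm_num at this
        · obtain ⟨g, hg, h0, h1⟩ := hcr y {x₀}
            (compl_singleton_mem hμ ht1 x₀) (by simp [hy])
          refine ⟨g, ⟨hg, ⟨y, h0⟩, ⟨x₀, h1 x₀ rfl⟩⟩, ?_⟩
          rw [h0]; intro h
          have := congrArg Subtype.val h
          norm_num at this
    · -- density
      refine Set.eq_univ_iff_forall.mpr fun w => Set.mem_sInter.mpr fun F hF => ?_
      obtain ⟨hFc, hsub⟩ := hF
      obtain ⟨Mfam, hMfam, hFcEq⟩ := hFc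
      have hall : ∀ g : {g : X → unitInterval // P g}, Mfam g = ∅ := by
        intro g
        by_contra hne
        have key : ∀ x : X, g.1 x ∈ Mfam g → False := by
          intro x hx
          have hmem : (fun (x : X) (g : {g : X → unitInterval // P g}) => g.1 x) x ∈ Fᶜ := by
            rw [hFcEq]
            exact Set.mem_iUnion.mpr ⟨g, hx⟩
          exact hmem (hsub (Set.mem_range_self x))
        rcases g0_zero_or_one (hMfam g) (Set.nonempty_iff_ne_empty.mpr hne) with h | h
        · obtain ⟨x, hx0⟩ := g.2.2.1
          exact key x (hx0 ▸ h)
        · obtain ⟨x, hx1⟩ := g.2.2.2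
          exact key x (hx1 ▸ h)
      have hFcempty : Fᶜ = ∅ := by
        rw [hFcEq]
        simp [hall]
      have hFu : F = Set.univ := Set.compl_empty_iff.mp hFcempty
      rw [hFu]; trivial
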